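/- Let U=(A,F) be an infinite binary information system not belonging to the class I, i.e., for every r∈ℕ there is an inconsistent equation system over U all of whose proper subsystems are consistent and which has more than r equations. Then for infinitely many n∈ℕ, there exists a problem z over U of dimension n such that every decision tree over z solving z relative to U using attributes and proper hypotheses has depth at least n−1. -/
import Mathlib


/-- An equation system over a binary information system with element set `A`
is a set of pairs `(g, δ)` encoding equations `g(x) = δ`. It is consistent
if it has a solution in `A`. -/
def Consistent {A : Type} (S : Set ((A → Bool) × Bool)) : Prop :=
  ∃ a : A, ∀ e ∈ S, e.1 a = e.2

/-- The system `S` uses only attributes from `F`. -/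
def OverF {A : Type} (F : Set (A → Bool)) (S : Set ((A → Bool) × Bool)) : Prop :=
  ∀ e ∈ S, e.1 ∈ F

/-- Solution set of an equation system. -/
def Sol {A : Type} (S : Set ((A → Bool) × Bool)) : Set A :=
  {a | ∀ e ∈ S, e.1 a = e.2}

/-- `U = (A, F)` is `r`-i-reduced: every inconsistent (finite) equation system over `U`
has an inconsistent subsystem with at most `r` equations. -/
def IReduced {A : Type} (F : Set (A → Bool)) (r : ℕ) : Prop :=
  ∀ S : Set ((A → Bool) × Bool), OverF F S → S.Finite → ¬ Consistent S →
    ∃ T ⊆ S, ¬ Consistent T ∧ T.ncard ≤ r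

/-- `U = (A, F)` is `r`-reduced: every consistent (finite) equation system over `U`
has a subsystem with the same solution set and at most `r` equations. -/
def RReduced {A : Type} (F : Set (A → Bool)) (r : ℕ) : Prop :=
  ∀ S : Set ((A → Bool) × Bool), OverF F S → S.Finite → Consistent S →
    ∃ T ⊆ S, Sol T = Sol S ∧ T.ncard ≤ r

/-- Decision trees over a problem `z = (f₀, …, f_{n-1})` of dimension `n`:
a node is a terminal node labeled with an answer tuple, an attribute query
(with two children, for the answers `fᵢ(x) = false` and `fᵢ(x) = true`), or a
hypothesis query `{f₀(x) = δ₀, …, f_{n-1}(x) = δ_{n-1}}` (with a child for the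
confirming answer and one child for each possible counterexample `fᵢ(x) = ¬δᵢ`). -/
inductive DT (n : ℕ) : Type where
  | leaf (ans : Fin n → Bool)
  | attr (i : Fin n) (c : Bool → DT n)
  | hyp (δ : Fin n → Bool) (conf : DT n) (ctr : Fin n → DT n)

namespace DT

/-- Depth of a decision tree: maximum number of queries on a complete path. -/
def depth {n : ℕ} : DT n → ℕ
  | leaf _ => 0
  | attr _ c => 1 + max (depth (c false)) (depth (c true))
  | hyp _ conf ctr => 1 + max (depth conf) (Finset.univ.sup fun i => depth (ctr i))

/-- The tree solves the problem `z` for the element `a`: along every complete path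
compatible with `a` (attribute queries are answered truthfully; a true hypothesis
is confirmed, and a false hypothesis may be answered by any valid counterexample),
the terminal label equals `z(a)`. -/
def Solves {A : Type} {n : ℕ} (z : Fin n → A → Bool) (a : A) : DT n → Prop
  | leaf ans => ∀ i, ans i = z i a
  | attr i c => Solves z a (c (z i a))
  | hyp δ conf ctr =>
      ((∀ i, z i a = δ i) → Solves z a conf) ∧
      (∀ i, z i a ≠ δ i → Solves z a (ctr i))

/-- The tree uses no attribute queries (only hypotheses). -/
def NoAttr {n : ℕ} : DT n → Prop
  | leaf _ => True
  | attr _ _ => False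
  | hyp _ conf ctr => NoAttr conf ∧ ∀ i, NoAttr (ctr i)

/-- All hypotheses used in the tree are proper for `U`, i.e. the corresponding
equation system `{f₀(x) = δ₀, …}` is consistent on `A`. -/
def ProperHyps {A : Type} {n : ℕ} (z : Fin n → A → Bool) : DT n → Prop
  | leaf _ => True
  | attr _ c => ∀ b, ProperHyps z (c b)
  | hyp δ conf ctr =>
      (∃ a : A, ∀ i, z i a = δ i) ∧ ProperHyps z conf ∧ ∀ i, ProperHyps z (ctr i)

end DT

/-- if `U` is an infinite binary information system not in the class `I`
(for every `r` there is an inconsistent equation system over `U`, all of whose proper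
subsystems are consistent, with more than `r` equations), then for infinitely many `n`
there is a problem of dimension `n` such that every decision tree solving it relative
to `U` using attributes and proper hypotheses has depth at least `n - 1`. -/
theorem stmt5 {A : Type} [Infinite A] (F : Set (A → Bool)) (hF : F.Infinite)
    (hnotI : ∀ r : ℕ, ∃ S : Set ((A → Bool) × Bool), OverF F S ∧ S.Finite ∧
      ¬ Consistent S ∧ (∀ T, T ⊂ S → Consistent T) ∧ r < S.ncard) :
    ∀ m : ℕ, ∃ n : ℕ, m ≤ n ∧ ∃ z : Fin n → A → Bool, (∀ i, z i ∈ F) ∧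
      ∀ Γ : DT n, (∀ a : A, DT.Solves z a Γ) → DT.ProperHyps z Γ →
        n - 1 ≤ Γ.depth := by
  intro m
  obtain ⟨S, hOver, hfin, hincons, hproper, hcard⟩ := hnotI m
  haveI : Fintype S := hfin.fintype
  have hcardeq : Fintype.card S = S.ncard := by
    rw [Set.ncard_eq_toFinset_card']
    simp [Set.toFinset_card]
  refine ⟨S.ncard, le_of_lt hcard, ?_⟩
  set n := S.ncard with hn
  let e : S ≃ Fin n := Fintype.equivFinOfCardEq hcardeq
  let E : Fin n → (A → Bool) × Bool := fun i => (e.symm i : (A → Bool) × Bool)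
  have Emem : ∀ i, E i ∈ S := fun i => (e.symm i).2
  have Einj : Function.Injective E := fun i j h => e.symm.injective (Subtype.ext h)
  have Esurj : ∀ s ∈ S, ∃ i, E i = s := fun s hs =>
    ⟨e ⟨s, hs⟩, by simp [E]⟩
  set z : Fin n → A → Bool := fun i => (E i).1 with hz
  set δ : Fin n → Bool := fun i => (E i).2 with hδ
  have hnoδ : ¬ ∃ a : A, ∀ i, z i a = δ i := by
    rintro ⟨a, ha⟩
    exact hincons ⟨a, fun s hs => by
      obtain ⟨i, rfl⟩ := Esurj s hs
      exact ha i⟩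
  have hstep : ∀ i : Fin n, ∃ a : A, (∀ j, j ≠ i → z j a = δ j) ∧ z i a ≠ δ i := by
    intro i
    have hss : S \ {E i} ⊂ S := Set.sdiff_singleton_ssubset.mpr (Emem i)
    obtain ⟨a, ha⟩ := hproper _ hss
    have haj : ∀ j, j ≠ i → z j a = δ j := by
      intro j hj
      exact ha (E j) ⟨Emem j, fun h => hj (Einj h)⟩
    refine ⟨a, haj, fun hcon => hnoδ ⟨a, fun j => ?_⟩⟩
    by_cases hji : j = i
    · exact hji ▸ hcon
    · exact haj j hji
  choose w hw hwne using hstep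
  refine ⟨z, fun i => hOver (E i) (Emem i), ?_⟩
  have key : ∀ Γ : DT n, DT.ProperHyps z Γ → ∀ J : Finset (Fin n),
      (∀ j ∈ J, DT.Solves z (w j) Γ) → J.card - 1 ≤ Γ.depth := by
    intro Γ
    induction Γ with
    | leaf ans =>
      intro _ J hsol
      have h1 : J.card ≤ 1 := by
        refine Finset.card_le_one.mpr fun j hj k hk => ?_
        by_contra hjk
        have h1 := hsol j hj j
        have h2 := hsol k hk j
        have : z j (w k) = δ j := hw k j hjk
        exact hwne j (by rw [← h1, h2, this])
      simp only [DT.depth]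
      omega
    | attr i c ih =>
      intro hp J hsol
      have hsol' : ∀ j ∈ J.erase i, DT.Solves z (w j) (c (δ i)) := by
        intro j hj
        have hji : j ≠ i := Finset.ne_of_mem_erase hj
        have := hsol j (Finset.mem_of_mem_erase hj)
        simpa [DT.Solves, hw j i hji.symm] using this
      have hd : (J.erase i).card - 1 ≤ (c (δ i)).depth := ih (δ i) (hp (δ i)) _ hsol'
      have hle : (c (δ i)).depth ≤ max ((c false).depth) ((c true).depth) := by
        cases h : δ i <;> simp
      have hcd : J.card - 1 ≤ (J.erase i).card := Finset.pred_card_le_card_erase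
      simp only [DT.depth]
      omega
    | hyp δ' conf ctr ihc ihctr =>
      intro hp J hsol
      obtain ⟨⟨a0, ha0⟩, hpc, hpctr⟩ := hp
      have hδ' : ∃ k, δ' k ≠ δ k := by
        by_contra h
        push_neg at h
        exact hnoδ ⟨a0, fun i => (ha0 i).trans (h i)⟩
      obtain ⟨k, hk⟩ := hδ'
      have hsol' : ∀ j ∈ J.erase k, DT.Solves z (w j) (ctr k) := by
        intro j hj
        have hjk : j ≠ k := Finset.ne_of_mem_erase hj
        have hne : z k (w j) ≠ δ' k := by
          rw [hw j k hjk.symm]; exact fun h => hk h.symm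
        exact (hsol j (Finset.mem_of_mem_erase hj)).2 k hne
      have hd : (J.erase k).card - 1 ≤ (ctr k).depth := ihctr k (hpctr k) _ hsol'
      have hle : (ctr k).depth ≤ Finset.univ.sup fun i => (ctr i).depth :=
        Finset.le_sup (f := fun i => (ctr i).depth) (Finset.mem_univ k)
      have hcd : J.card - 1 ≤ (J.erase k).card := Finset.pred_card_le_card_erase
      simp only [DT.depth]
      omega
  intro Γ hsolv hprop
  have := key Γ hprop Finset.univ (fun j _ => hsolv (w j))
  simpa using this
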